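/- Let n ≥ 1 and τ < tf be reals. Let f : ℝ × ℝⁿ → ℝⁿ be twice continuously differentiable. Let x0 : [τ,tf] → ℝⁿ be continuously differentiable with x0′(t) = f(t,x0(t)) for all t ∈ [τ,tf], and set A(t) = D_x f(t,x0(t)) (the derivative of f in its second argument evaluated along the trajectory). Let Q : [τ,tf] → ℝ^{n×n} be continuous with Q(t) symmetric positive definite for every t, and let P0 : [τ,tf] → ℝ^{n×n} be continuously differentiable with P0(t) symmetric positive definite for every t, satisfying the Lyapunov differential equation P0′(t) = −(A(t)ᵀ P0(t) + P0(t) A(t) + Q(t)) on [τ,tf]. Then there exists c > 0 such that, defining V(t,x) = exp(c(tf−t)/(tf−τ)) · (x − x0(t))ᵀ P0(t) (x − x0(t)), for every t ∈ [τ,tf] and every x ∈ ℝⁿ with V(t,x) = 1 one has ∂V/∂t(t,x) + ⟨∇ₓV(t,x), f(t,x)⟩ < 0. -/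

import Mathlib

open Set Matrix

/-- The quadratic form `x ↦ xᵀ M x` associated to a square matrix `M`. -/
noncomputable def quadForm {n : ℕ} (M : Matrix (Fin n) (Fin n) ℝ)
    (x : EuclideanSpace ℝ (Fin n)) : ℝ :=
  ∑ i, ∑ j, x i * M i j * x j

/-- Lemma 2 of the paper: given a nominal solution `x0` of `ẋ = f(t,x)` on `[τ, tf]`,
the linearization `A(t) = D_x f(t, x0(t))` along it, and a symmetric positive definite
solution `P0` of the Lyapunov differential equation
`P0' = -(AᵀP0 + P0 A + Q)` with `Q` continuous symmetric positive definite, there is a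
constant `c > 0` such that the exponentially rescaled time-varying quadratic form
`V(t,x) = exp(c (tf - t)/(tf - τ)) (x - x0(t))ᵀ P0(t) (x - x0(t))` satisfies the strict
descent condition `∂V/∂t + ⟨∇ₓV, f⟩ < 0` on its unit level set for every `t ∈ [τ, tf]`. -/
lemma coord_abs_le_norm {n : ℕ} (z : EuclideanSpace ℝ (Fin n)) (i : Fin n) : |z i| ≤ ‖z‖ := by
  rw [EuclideanSpace.norm_eq, ← Real.sqrt_sq_eq_abs]
  apply Real.sqrt_le_sqrt
  have := Finset.single_le_sum (f := fun j => ‖z j‖ ^ 2) (fun j _ => by positivity)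
    (Finset.mem_univ i)
  simpa [Real.norm_eq_abs, sq_abs] using this

lemma quadForm_smul {n : ℕ} (M : Matrix (Fin n) (Fin n) ℝ) (r : ℝ)
    (z : EuclideanSpace ℝ (Fin n)) : quadForm M (r • z) = r ^ 2 * quadForm M z := by
  simp only [quadForm, PiLp.smul_apply, smul_eq_mul, Finset.mul_sum]
  congr 1; ext i; congr 1; ext j; ring

lemma fderiv_quad_apply {n : ℕ} (M : Matrix (Fin n) (Fin n) ℝ)
    (a x v : EuclideanSpace ℝ (Fin n)) :
    HasFDerivAt (fun y : EuclideanSpace ℝ (Fin n) => ∑ i, ∑ j, (y i - a i) * M i j * (y j - a j))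
      (∑ i : Fin n, ∑ j : Fin n,
        (((x i - a i) * M i j) • (EuclideanSpace.proj j : EuclideanSpace ℝ (Fin n) →L[ℝ] ℝ)
          + (x j - a j) • ((M i j) • (EuclideanSpace.proj i : EuclideanSpace ℝ (Fin n) →L[ℝ] ℝ)))) x := by
  apply HasFDerivAt.fun_sum
  intro i _
  apply HasFDerivAt.fun_sum
  intro j _
  have hi : HasFDerivAt (fun y : EuclideanSpace ℝ (Fin n) => y i - a i)
      (EuclideanSpace.proj i : EuclideanSpace ℝ (Fin n) →L[ℝ] ℝ) x :=
    by simpa using ((EuclideanSpace.proj (𝕜 := ℝ) i).hasFDerivAt (x := x)).sub_const (a i)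
  have hj : HasFDerivAt (fun y : EuclideanSpace ℝ (Fin n) => y j - a j)
      (EuclideanSpace.proj j : EuclideanSpace ℝ (Fin n) →L[ℝ] ℝ) x :=
    by simpa using ((EuclideanSpace.proj (𝕜 := ℝ) j).hasFDerivAt (x := x)).sub_const (a j)
  exact (hi.mul_const (M i j)).mul hj

lemma fderiv_spatial {n : ℕ} (e : ℝ) (M : Matrix (Fin n) (Fin n) ℝ)
    (a x v : EuclideanSpace ℝ (Fin n)) :
    fderiv ℝ (fun y : EuclideanSpace ℝ (Fin n) =>
        e * ∑ i, ∑ j, (y i - a i) * M i j * (y j - a j)) x v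
      = e * ∑ i, ∑ j, (v i * M i j * (x j - a j) + (x i - a i) * M i j * v j) := by
  have h := (fderiv_quad_apply M a x v).const_mul e
  rw [h.fderiv]
  simp only [ContinuousLinearMap.smul_apply, ContinuousLinearMap.sum_apply,
    ContinuousLinearMap.add_apply, smul_eq_mul]
  simp only [PiLp.proj_apply, Finset.mul_sum]
  apply Finset.sum_congr rfl
  intro i _
  apply Finset.sum_congr rfl
  intro j _
  ring

lemma hasDerivWithinAt_V {n : ℕ} {τ tf : ℝ} (c : ℝ) (x0 : ℝ → EuclideanSpace ℝ (Fin n))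
    (P0 : ℝ → Matrix (Fin n) (Fin n) ℝ) (P' : Matrix (Fin n) (Fin n) ℝ)
    (u x : EuclideanSpace ℝ (Fin n)) (t : ℝ)
    (hx0 : HasDerivWithinAt x0 u (Icc τ tf) t)
    (hP : ∀ i j, HasDerivWithinAt (fun s => P0 s i j) (P' i j) (Icc τ tf) t) :
    HasDerivWithinAt
      (fun s => Real.exp (c * (tf - s) / (tf - τ)) * quadForm (P0 s) (x - x0 s))
      (Real.exp (c * (tf - t) / (tf - τ)) * (c * -1 / (tf - τ)) * quadForm (P0 t) (x - x0 t)
        + Real.exp (c * (tf - t) / (tf - τ)) *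
          (∑ i, ∑ j, (((-(u i)) * P0 t i j + (x i - x0 t i) * P' i j) * (x j - x0 t j)
            + ((x i - x0 t i) * P0 t i j) * (-(u j))))) (Icc τ tf) t := by
  simp only [quadForm, PiLp.sub_apply]
  have hexp : HasDerivAt (fun s => Real.exp (c * (tf - s) / (tf - τ)))
      (Real.exp (c * (tf - t) / (tf - τ)) * (c * -1 / (tf - τ))) t := by
    exact ((((hasDerivAt_id t).const_sub tf).const_mul c).div_const (tf - τ)).exp
  have hW : HasDerivWithinAt
      (fun s => ∑ i, ∑ j, (x i - x0 s i) * P0 s i j * (x j - x0 s j))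
      (∑ i, ∑ j, (((-(u i)) * P0 t i j + (x i - x0 t i) * P' i j) * (x j - x0 t j)
        + ((x i - x0 t i) * P0 t i j) * (-(u j)))) (Icc τ tf) t := by
    apply HasDerivWithinAt.fun_sum
    intro i _
    apply HasDerivWithinAt.fun_sum
    intro j _
    have hxi : HasDerivWithinAt (fun s => x0 s i) (u i) (Icc τ tf) t :=
      (EuclideanSpace.proj (𝕜 := ℝ) i).hasFDerivAt.comp_hasDerivWithinAt t hx0
    have hxj : HasDerivWithinAt (fun s => x0 s j) (u j) (Icc τ tf) t :=
      (EuclideanSpace.proj (𝕜 := ℝ) j).hasFDerivAt.comp_hasDerivWithinAt t hx0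
    have hzi := hxi.const_sub (x i)
    have hzj := hxj.const_sub (x j)
    exact (hzi.mul (hP i j)).mul hzj
  exact hexp.hasDerivWithinAt.mul hW

lemma quadForm_eq_dot {n : ℕ} (M : Matrix (Fin n) (Fin n) ℝ) (z : EuclideanSpace ℝ (Fin n)) :
    quadForm M z = dotProduct (star (z : Fin n → ℝ)) (M *ᵥ (z : Fin n → ℝ)) := by
  simp only [quadForm, dotProduct, Matrix.mulVec, star_trivial, Finset.mul_sum]
  apply Finset.sum_congr rfl
  intro i _
  apply Finset.sum_congr rfl
  intro j _
  ring

lemma exists_lam {n : ℕ} (hn : 1 ≤ n) {τ tf : ℝ} (hτtf : τ < tf)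
    (P0 : ℝ → Matrix (Fin n) (Fin n) ℝ)
    (hcont : ∀ i j, ContinuousOn (fun t => P0 t i j) (Icc τ tf))
    (hpos : ∀ t ∈ Icc τ tf, (P0 t).PosDef) :
    ∃ lam > (0:ℝ), ∀ t ∈ Icc τ tf, ∀ z : EuclideanSpace ℝ (Fin n),
      lam * ‖z‖ ^ 2 ≤ quadForm (P0 t) z := by
  haveI : Nonempty (Fin n) := ⟨⟨0, hn⟩⟩
  have hS : IsCompact ((Icc τ tf) ×ˢ (Metric.sphere (0 : EuclideanSpace ℝ (Fin n)) 1)) :=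
    isCompact_Icc.prod (isCompact_sphere 0 1)
  have hne : ((Icc τ tf) ×ˢ (Metric.sphere (0 : EuclideanSpace ℝ (Fin n)) 1)).Nonempty := by
    refine Set.prod_nonempty_iff.2 ⟨⟨τ, ?_⟩, NormedSpace.sphere_nonempty.mpr zero_le_one⟩
    exact ⟨le_refl τ, hτtf.le⟩
  have hcont' : ContinuousOn
      (fun p : ℝ × EuclideanSpace ℝ (Fin n) => quadForm (P0 p.1) p.2)
      ((Icc τ tf) ×ˢ (Metric.sphere (0 : EuclideanSpace ℝ (Fin n)) 1)) := by
    simp only [quadForm]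
    apply continuousOn_finset_sum
    intro i _
    apply continuousOn_finset_sum
    intro j _
    have h2i : Continuous (fun p : ℝ × EuclideanSpace ℝ (Fin n) => p.2 i) :=
      (EuclideanSpace.proj (𝕜 := ℝ) i).continuous.comp continuous_snd
    have h2j : Continuous (fun p : ℝ × EuclideanSpace ℝ (Fin n) => p.2 j) :=
      (EuclideanSpace.proj (𝕜 := ℝ) j).continuous.comp continuous_snd
    have h1 : ContinuousOn (fun p : ℝ × EuclideanSpace ℝ (Fin n) => P0 p.1 i j)
        ((Icc τ tf) ×ˢ (Metric.sphere (0 : EuclideanSpace ℝ (Fin n)) 1)) := by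
      apply (hcont i j).comp continuous_fst.continuousOn
      intro p hp
      exact hp.1
    exact (h2i.continuousOn.mul h1).mul h2j.continuousOn
  obtain ⟨p0, hp0S, hmin⟩ := hS.exists_isMinOn hne hcont'
  have hp0ne : (p0.2 : EuclideanSpace ℝ (Fin n)) ≠ 0 := by
    have := hp0S.2
    simp only [Metric.mem_sphere, dist_zero_right] at this
    intro h
    rw [h] at this
    simp at this
  have hlam : 0 < quadForm (P0 p0.1) p0.2 := by
    rw [quadForm_eq_dot]
    exact (hpos p0.1 hp0S.1).dotProduct_mulVec_pos (fun h => hp0ne (WithLp.ofLp_injective 2 h))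
  refine ⟨quadForm (P0 p0.1) p0.2, hlam, ?_⟩
  intro t ht z
  rcases eq_or_ne z 0 with rfl | hz
  · simp [quadForm]
  · have hnz : (0:ℝ) < ‖z‖ := norm_pos_iff.mpr hz
    set w : EuclideanSpace ℝ (Fin n) := ‖z‖⁻¹ • z with hw
    have hwS : (t, w) ∈ (Icc τ tf) ×ˢ (Metric.sphere (0 : EuclideanSpace ℝ (Fin n)) 1) := by
      constructor
      · exact ht
      · simp only [Metric.mem_sphere, dist_zero_right, hw, norm_smul, norm_inv, norm_norm]
        field_simp
    have : quadForm (P0 p0.1) p0.2 ≤ quadForm (P0 t) w := hmin hwS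
    have hqw : quadForm (P0 t) w = (‖z‖⁻¹) ^ 2 * quadForm (P0 t) z := quadForm_smul _ _ _
    rw [hqw] at this
    have h2 := mul_le_mul_of_nonneg_right this (sq_nonneg ‖z‖)
    calc quadForm (P0 p0.1) p0.2 * ‖z‖ ^ 2 ≤ (‖z‖⁻¹ ^ 2 * quadForm (P0 t) z) * ‖z‖ ^ 2 := h2
      _ = quadForm (P0 t) z := by field_simp

lemma exists_entry_bound {n : ℕ} {τ tf : ℝ} (P : ℝ → Matrix (Fin n) (Fin n) ℝ)
    (hcont : ∀ i j, ContinuousOn (fun t => P t i j) (Icc τ tf)) :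
    ∃ B ≥ (0:ℝ), ∀ t ∈ Icc τ tf, ∀ i j, |P t i j| ≤ B := by
  have h : ∀ p : Fin n × Fin n, ∃ C, ∀ t ∈ Icc τ tf, |P t p.1 p.2| ≤ C := by
    intro p
    obtain ⟨C, hC⟩ := isCompact_Icc.exists_bound_of_continuousOn (hcont p.1 p.2)
    exact ⟨C, fun t ht => by simpa [Real.norm_eq_abs] using hC t ht⟩
  choose C hC using h
  refine ⟨∑ p : Fin n × Fin n, |C p|, by positivity, ?_⟩
  intro t ht i j
  calc |P t i j| ≤ C (i, j) := hC (i, j) t ht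
    _ ≤ |C (i, j)| := le_abs_self _
    _ ≤ ∑ p : Fin n × Fin n, |C p| :=
        Finset.single_le_sum (f := fun p => |C p|) (fun p _ => abs_nonneg _) (Finset.mem_univ _)


lemma abs_triple_le {a b c A B C : ℝ} (ha : |a| ≤ A) (hb : |b| ≤ B) (hc : |c| ≤ C)
    (hA : 0 ≤ A) (hB : 0 ≤ B) : a * b * c ≤ A * B * C := by
  calc a * b * c ≤ |a * b * c| := le_abs_self _
    _ = |a| * |b| * |c| := by rw [abs_mul, abs_mul]
    _ ≤ A * B * C := by
        apply mul_le_mul (mul_le_mul ha hb (abs_nonneg _) hA) hc (abs_nonneg _)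
        positivity

set_option maxHeartbeats 2000000 in
theorem exp_rescaled_lyapunov_certificate
    (n : ℕ) (hn : 1 ≤ n) (τ tf : ℝ) (hτtf : τ < tf)
    (f : ℝ × EuclideanSpace ℝ (Fin n) → EuclideanSpace ℝ (Fin n))
    (hf : ContDiff ℝ 2 f)
    (x0 : ℝ → EuclideanSpace ℝ (Fin n))
    (hx0 : ∀ t ∈ Icc τ tf, HasDerivWithinAt x0 (f (t, x0 t)) (Icc τ tf) t)
    (A : ℝ → Matrix (Fin n) (Fin n) ℝ)
    (hA : ∀ t ∈ Icc τ tf, ∀ i j, A t i j =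
      (fderiv ℝ (fun y => f (t, y)) (x0 t) (EuclideanSpace.single j 1)) i)
    (Q : ℝ → Matrix (Fin n) (Fin n) ℝ)
    (hQcont : ∀ i j, ContinuousOn (fun t => Q t i j) (Icc τ tf))
    (hQpos : ∀ t ∈ Icc τ tf, (Q t).PosDef)
    (P0 : ℝ → Matrix (Fin n) (Fin n) ℝ)
    (hP0pos : ∀ t ∈ Icc τ tf, (P0 t).PosDef)
    (hP0' : ∀ t ∈ Icc τ tf, ∀ i j,
      HasDerivWithinAt (fun s => P0 s i j)
        ((-((A t)ᵀ * P0 t + P0 t * A t + Q t)) i j) (Icc τ tf) t) :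
    ∃ c > (0 : ℝ), ∀ t ∈ Icc τ tf, ∀ x : EuclideanSpace ℝ (Fin n),
      Real.exp (c * (tf - t) / (tf - τ)) * quadForm (P0 t) (x - x0 t) = 1 →
      derivWithin
          (fun s => Real.exp (c * (tf - s) / (tf - τ)) * quadForm (P0 s) (x - x0 s))
          (Icc τ tf) t
        + fderiv ℝ
            (fun y => Real.exp (c * (tf - t) / (tf - τ)) * quadForm (P0 t) (y - x0 t))
            x (f (t, x)) < 0 := by
  have hsub : tf - τ > 0 := by linarith
  have hx0cont : ContinuousOn x0 (Icc τ tf) := fun t ht => (hx0 t ht).continuousWithinAt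
  have hP0cont : ∀ i j, ContinuousOn (fun t => P0 t i j) (Icc τ tf) :=
    fun i j t ht => (hP0' t ht i j).continuousWithinAt
  set D : ℝ → Matrix (Fin n) (Fin n) ℝ :=
    fun s => -((A s)ᵀ * P0 s + P0 s * A s + Q s) with hD
  -- continuity of A
  have hdf : Differentiable ℝ f := hf.differentiable (by norm_num)
  have hAeq : ∀ s ∈ Icc τ tf, ∀ i j, A s i j =
      (fderiv ℝ f (s, x0 s)) (((0:ℝ), EuclideanSpace.single j 1)) i := by
    intro s hs i j
    rw [hA s hs i j]
    have hJ : HasFDerivAt (fun y : EuclideanSpace ℝ (Fin n) => ((s:ℝ), y))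
        ((0 : EuclideanSpace ℝ (Fin n) →L[ℝ] ℝ).prod
          (ContinuousLinearMap.id ℝ (EuclideanSpace ℝ (Fin n)))) (x0 s) :=
      (hasFDerivAt_const s _).prodMk (hasFDerivAt_id _)
    have hc2 : HasFDerivAt (fun y => f (s, y))
        ((fderiv ℝ f (s, x0 s)).comp ((0 : EuclideanSpace ℝ (Fin n) →L[ℝ] ℝ).prod
          (ContinuousLinearMap.id ℝ (EuclideanSpace ℝ (Fin n))))) (x0 s) :=
      (hdf (s, x0 s)).hasFDerivAt.comp (x0 s) hJ
    rw [hc2.fderiv]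
    simp
  have hAcont : ∀ i j, ContinuousOn (fun s => A s i j) (Icc τ tf) := by
    intro i j
    have h1 : ContinuousOn (fun s => ((s : ℝ), x0 s)) (Icc τ tf) :=
      continuousOn_id.prodMk hx0cont
    have h2 : ContinuousOn (fun s => fderiv ℝ f (s, x0 s)) (Icc τ tf) :=
      (hf.continuous_fderiv (by norm_num)).comp_continuousOn h1
    have h3 : Continuous (fun Lm : (ℝ × EuclideanSpace ℝ (Fin n)) →L[ℝ]
        EuclideanSpace ℝ (Fin n) => (Lm (((0:ℝ), EuclideanSpace.single j 1))) i) :=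
      (EuclideanSpace.proj (𝕜 := ℝ) i).continuous.comp
        (ContinuousLinearMap.apply ℝ (EuclideanSpace ℝ (Fin n))
          (((0:ℝ), EuclideanSpace.single j 1))).continuous
    exact (h3.comp_continuousOn h2).congr (fun s hs => hAeq s hs i j)
  have hDcont : ∀ i j, ContinuousOn (fun s => D s i j) (Icc τ tf) := by
    intro i j
    have heq : (fun s => D s i j) = fun s =>
        -((∑ k, A s k i * P0 s k j) + (∑ k, P0 s i k * A s k j) + Q s i j) := by
      funext s
      simp [hD, Matrix.neg_apply, Matrix.add_apply, Matrix.mul_apply, Matrix.transpose_apply]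
    rw [heq]
    apply ContinuousOn.neg
    apply ContinuousOn.add
    apply ContinuousOn.add
    · exact continuousOn_finset_sum _ (fun k _ => (hAcont k i).mul (hP0cont k j))
    · exact continuousOn_finset_sum _ (fun k _ => (hP0cont i k).mul (hAcont k j))
    · exact hQcont i j
  obtain ⟨B1, hB1nn, hB1⟩ := exists_entry_bound D hDcont
  obtain ⟨B2, hB2nn, hB2⟩ := exists_entry_bound P0 hP0cont
  obtain ⟨lam, hlam, hlamle⟩ := exists_lam hn hτtf P0 hP0cont hP0pos
  obtain ⟨ρ, hρ⟩ := isCompact_Icc.exists_bound_of_continuousOn hx0cont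
  have hρnn : 0 ≤ ρ := le_trans (norm_nonneg _) (hρ τ (left_mem_Icc.mpr hτtf.le))
  set R : ℝ := Real.sqrt (1 / lam) with hRdef
  have hRnn : 0 ≤ R := Real.sqrt_nonneg _
  -- Lipschitz bound on a compact convex set
  set Kset : Set (ℝ × EuclideanSpace ℝ (Fin n)) :=
    Icc τ tf ×ˢ Metric.closedBall (0 : EuclideanSpace ℝ (Fin n)) (ρ + R + 1) with hKdef
  have hKconv : Convex ℝ Kset := (convex_Icc _ _).prod (convex_closedBall _ _)
  obtain ⟨L, hL⟩ := (isCompact_Icc.prod (isCompact_closedBall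
      (0 : EuclideanSpace ℝ (Fin n)) (ρ + R + 1))).exists_bound_of_continuousOn
      ((hf.continuous_fderiv (by norm_num)).continuousOn (s := Kset))
  have hLnn : 0 ≤ L := by
    refine le_trans (norm_nonneg _) (hL (τ, 0) ⟨left_mem_Icc.mpr hτtf.le, ?_⟩)
    simp only [Metric.mem_closedBall, dist_self]
    positivity
  have hLip : ∀ p ∈ Kset, ∀ q ∈ Kset, ‖f p - f q‖ ≤ L * ‖p - q‖ := by
    intro p hp q hq
    exact hKconv.norm_image_sub_le_of_norm_fderiv_le
      (fun y _ => (hdf y)) (fun y hy => hL y hy) hq hp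
  -- the constant
  set C0 : ℝ := (n : ℝ) ^ 2 * (B1 + 2 * B2 * L) with hC0
  have hC0nn : 0 ≤ C0 := by positivity
  set Mc : ℝ := C0 / lam with hMc
  have hMcnn : 0 ≤ Mc := by positivity
  refine ⟨(tf - τ) * (Mc + 1), by positivity, ?_⟩
  intro t ht x hlevel
  set c : ℝ := (tf - τ) * (Mc + 1) with hc
  have hcpos : 0 < c := by positivity
  -- compute the time derivative
  have hV := hasDerivWithinAt_V c x0 P0 (D t) (f (t, x0 t)) x t (hx0 t ht)
    (fun i j => hP0' t ht i j)
  have hderiv := hV.derivWithin (uniqueDiffOn_Icc hτtf t ht)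
  rw [hderiv]
  -- compute the spatial derivative
  have hfun : (fun y : EuclideanSpace ℝ (Fin n) =>
      Real.exp (c * (tf - t) / (tf - τ)) * quadForm (P0 t) (y - x0 t))
      = fun y => Real.exp (c * (tf - t) / (tf - τ)) *
          ∑ i, ∑ j, (y i - x0 t i) * P0 t i j * (y j - x0 t j) := by
    funext y
    simp [quadForm, PiLp.sub_apply]
  rw [hfun, fderiv_spatial]
  -- notation
  set e : ℝ := Real.exp (c * (tf - t) / (tf - τ)) with he
  set z : EuclideanSpace ℝ (Fin n) := x - x0 t with hz
  set u : EuclideanSpace ℝ (Fin n) := f (t, x0 t) with hu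
  set v : EuclideanSpace ℝ (Fin n) := f (t, x) with hv
  set Wq : ℝ := quadForm (P0 t) z with hWq
  have hepos : 0 < e := Real.exp_pos _
  have he1 : 1 ≤ e := by
    rw [he]
    apply Real.one_le_exp
    have h0 : 0 ≤ tf - t := by linarith [ht.2]
    positivity
  have hlamz : lam * ‖z‖ ^ 2 ≤ Wq := by rw [hWq]; exact hlamle t ht z
  have hWqnn : 0 ≤ Wq := le_trans (by positivity) hlamz
  have hWle1 : Wq ≤ 1 := by nlinarith [hlevel]
  have hzn : ‖z‖ ≤ R := by
    have h1 : lam * ‖z‖ ^ 2 ≤ 1 := le_trans hlamz hWle1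
    have h2 : ‖z‖ ^ 2 ≤ 1 / lam := by
      rw [le_div_iff₀ hlam]; linarith
    calc ‖z‖ = Real.sqrt (‖z‖ ^ 2) := by rw [Real.sqrt_sq (norm_nonneg _)]
      _ ≤ Real.sqrt (1 / lam) := Real.sqrt_le_sqrt h2
  have hznn : 0 ≤ ‖z‖ := norm_nonneg _
  -- membership in the Lipschitz region
  have hxK : (t, x) ∈ Kset := by
    refine ⟨ht, ?_⟩
    simp only [Metric.mem_closedBall, dist_zero_right]
    have hxe : ‖x‖ ≤ ‖x0 t‖ + ‖z‖ := by
      have hxx : x = x0 t + z := by rw [hz]; abel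
      rw [hxx]
      exact norm_add_le _ _
    linarith [hρ t ht, hzn]
  have hx0K : (t, x0 t) ∈ Kset := by
    refine ⟨ht, ?_⟩
    simp only [Metric.mem_closedBall, dist_zero_right]
    linarith [hρ t ht]
  have hvu : ‖v - u‖ ≤ L * ‖z‖ := by
    have h0 := hLip (t, x) hxK (t, x0 t) hx0K
    have hnorm : ‖((t, x) : ℝ × EuclideanSpace ℝ (Fin n)) - (t, x0 t)‖ = ‖z‖ := by
      rw [Prod.norm_def]
      simp [hz]
    rw [hnorm] at h0
    exact h0
  have hvui : ∀ i, |v i - u i| ≤ L * ‖z‖ := by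
    intro i
    have h1 : |(v - u) i| ≤ ‖v - u‖ := coord_abs_le_norm (v - u) i
    rw [PiLp.sub_apply] at h1
    exact le_trans h1 hvu
  have hzi : ∀ i, |x i - x0 t i| ≤ ‖z‖ := by
    intro i
    have h1 : |(z : EuclideanSpace ℝ (Fin n)) i| ≤ ‖z‖ := coord_abs_le_norm z i
    rwa [hz, PiLp.sub_apply] at h1
  -- bound the combined sum
  have hGsum :
      (∑ i, ∑ j, (((-(u i)) * P0 t i j + (x i - x0 t i) * D t i j) * (x j - x0 t j)
          + ((x i - x0 t i) * P0 t i j) * (-(u j))))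
        + (∑ i, ∑ j, (v i * P0 t i j * (x j - x0 t j)
            + (x i - x0 t i) * P0 t i j * v j))
      ≤ C0 * ‖z‖ ^ 2 := by
    rw [← Finset.sum_add_distrib]
    have hterm : ∀ i ∈ (Finset.univ : Finset (Fin n)),
        (∑ j, (((-(u i)) * P0 t i j + (x i - x0 t i) * D t i j) * (x j - x0 t j)
          + ((x i - x0 t i) * P0 t i j) * (-(u j))))
        + (∑ j, (v i * P0 t i j * (x j - x0 t j) + (x i - x0 t i) * P0 t i j * v j))
        ≤ ∑ _j : Fin n, (B1 + 2 * B2 * L) * ‖z‖ ^ 2 := by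
      intro i _
      rw [← Finset.sum_add_distrib]
      apply Finset.sum_le_sum
      intro j _
      have key : ((-(u i)) * P0 t i j + (x i - x0 t i) * D t i j) * (x j - x0 t j)
            + ((x i - x0 t i) * P0 t i j) * (-(u j))
            + (v i * P0 t i j * (x j - x0 t j) + (x i - x0 t i) * P0 t i j * v j)
          = (v i - u i) * P0 t i j * (x j - x0 t j)
            + (x i - x0 t i) * D t i j * (x j - x0 t j)
            + (x i - x0 t i) * P0 t i j * (v j - u j) := by ring
      rw [key]
      have h1 : (v i - u i) * P0 t i j * (x j - x0 t j) ≤ L * ‖z‖ * B2 * ‖z‖ :=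
        abs_triple_le (hvui i) (hB2 t ht i j) (hzi j) (by positivity) hB2nn
      have h2 : (x i - x0 t i) * D t i j * (x j - x0 t j) ≤ ‖z‖ * B1 * ‖z‖ :=
        abs_triple_le (hzi i) (hB1 t ht i j) (hzi j) hznn hB1nn
      have h3 : (x i - x0 t i) * P0 t i j * (v j - u j) ≤ ‖z‖ * B2 * (L * ‖z‖) :=
        abs_triple_le (hzi i) (hB2 t ht i j) (hvui j) hznn hB2nn
      calc (v i - u i) * P0 t i j * (x j - x0 t j)
            + (x i - x0 t i) * D t i j * (x j - x0 t j)
            + (x i - x0 t i) * P0 t i j * (v j - u j)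
          ≤ L * ‖z‖ * B2 * ‖z‖ + ‖z‖ * B1 * ‖z‖ + ‖z‖ * B2 * (L * ‖z‖) :=
            add_le_add (add_le_add h1 h2) h3
        _ = (B1 + 2 * B2 * L) * ‖z‖ ^ 2 := by ring
    calc (∑ i, ((∑ j, (((-(u i)) * P0 t i j + (x i - x0 t i) * D t i j) * (x j - x0 t j)
          + ((x i - x0 t i) * P0 t i j) * (-(u j))))
        + (∑ j, (v i * P0 t i j * (x j - x0 t j) + (x i - x0 t i) * P0 t i j * v j))))
        ≤ ∑ _i : Fin n, ∑ _j : Fin n, (B1 + 2 * B2 * L) * ‖z‖ ^ 2 :=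
          Finset.sum_le_sum hterm
      _ = C0 * ‖z‖ ^ 2 := by
          simp only [Finset.sum_const, Finset.card_univ, Fintype.card_fin, nsmul_eq_mul, hC0]
          ring
  -- final numeric estimate
  have hzsq : ‖z‖ ^ 2 ≤ Wq / lam := by
    rw [le_div_iff₀ hlam]
    linarith [hlamz]
  have hfirst : e * (c * -1 / (tf - τ)) * Wq = -(Mc + 1) := by
    have h1 : c * -1 / (tf - τ) = -(Mc + 1) := by
      rw [hc]; field_simp
    rw [h1]
    calc e * -(Mc + 1) * Wq = -(Mc + 1) * (e * Wq) := by ring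
      _ = -(Mc + 1) := by rw [hlevel]; ring
  have hsecond :
      e * (∑ i, ∑ j, (((-(u i)) * P0 t i j + (x i - x0 t i) * D t i j) * (x j - x0 t j)
          + ((x i - x0 t i) * P0 t i j) * (-(u j))))
        + e * (∑ i, ∑ j, (v i * P0 t i j * (x j - x0 t j)
            + (x i - x0 t i) * P0 t i j * v j))
      ≤ Mc := by
    have h1 : e * (∑ i, ∑ j, (((-(u i)) * P0 t i j + (x i - x0 t i) * D t i j) * (x j - x0 t j)
          + ((x i - x0 t i) * P0 t i j) * (-(u j))))
        + e * (∑ i, ∑ j, (v i * P0 t i j * (x j - x0 t j)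
            + (x i - x0 t i) * P0 t i j * v j))
        = e * ((∑ i, ∑ j, (((-(u i)) * P0 t i j + (x i - x0 t i) * D t i j) * (x j - x0 t j)
          + ((x i - x0 t i) * P0 t i j) * (-(u j))))
        + (∑ i, ∑ j, (v i * P0 t i j * (x j - x0 t j)
            + (x i - x0 t i) * P0 t i j * v j))) := by ring
    rw [h1]
    calc e * ((∑ i, ∑ j, (((-(u i)) * P0 t i j + (x i - x0 t i) * D t i j) * (x j - x0 t j)
          + ((x i - x0 t i) * P0 t i j) * (-(u j))))
        + (∑ i, ∑ j, (v i * P0 t i j * (x j - x0 t j)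
            + (x i - x0 t i) * P0 t i j * v j)))
        ≤ e * (C0 * ‖z‖ ^ 2) := mul_le_mul_of_nonneg_left hGsum hepos.le
      _ ≤ e * (C0 * (Wq / lam)) :=
          mul_le_mul_of_nonneg_left (mul_le_mul_of_nonneg_left hzsq hC0nn) hepos.le
      _ = (C0 / lam) * (e * Wq) := by ring
      _ = Mc := by rw [hlevel, hMc]; ring
  linarith [hfirst, hsecond, hMcnn]
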